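/- A linear code C over F_q is minimal if and only if for every pair of linearly independent codewords c, c' ∈ C, one has Σ_{a ∈ F_q^*} wt(c' − a·c) ≠ (q−1)·wt(c') − wt(c). -/

import Mathlib

private lemma stmt5_coord (F : Type) [Field F] [Fintype F] [DecidableEq F] (x y : F) :
    ∑ a ∈ (Finset.univ : Finset F) \ {0}, (if y - a * x ≠ 0 then (1:ℤ) else 0)
    = ((Fintype.card F : ℤ) - 1) * (if y ≠ 0 then 1 else 0)
      - (if x ≠ 0 then 1 else 0) + (Fintype.card F : ℤ) * (if x ≠ 0 ∧ y = 0 then 1 else 0) := by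
  have hcard : (((Finset.univ : Finset F) \ {0}).card : ℤ) = (Fintype.card F : ℤ) - 1 := by
    rw [Finset.card_sdiff_of_subset (Finset.subset_univ _)]
    have : 1 ≤ Fintype.card F := Fintype.card_pos
    simp; omega
  by_cases hx : x = 0
  · subst hx
    by_cases hy : y = 0 <;> simp [hy, hcard, Finset.sum_const]
  · have key : ∀ a : F, (y - a * x ≠ 0) ↔ a ≠ y * x⁻¹ := by
      intro a
      constructor
      · rintro h rfl; apply h; field_simp; simp
      · intro h hz; apply h
        have hyx : y = a * x := sub_eq_zero.mp hz
        rw [hyx]; field_simp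
    simp_rw [key]
    have : ∑ a ∈ (Finset.univ : Finset F) \ {0}, (if a ≠ y * x⁻¹ then (1:ℤ) else 0)
        = ∑ a ∈ (Finset.univ : Finset F) \ {0}, ((1:ℤ) - if a = y * x⁻¹ then 1 else 0) := by
      apply Finset.sum_congr rfl; intro a _; by_cases h : a = y * x⁻¹ <;> simp [h]
    rw [this, Finset.sum_sub_distrib, Finset.sum_const, Finset.sum_ite_eq' ((Finset.univ : Finset F) \ {0}) (y * x⁻¹) (fun _ => (1:ℤ))]
    by_cases hy : y = 0
    · simp [hy, hx, hcard]
      try ring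
    · have hmem : y * x⁻¹ ∈ (Finset.univ : Finset F) \ {0} := by
        simp [hy, hx]
      simp [hmem, hx, hy, hcard]
      try ring

private lemma stmt5_norm (F : Type) [Field F] [DecidableEq F] (n : ℕ) (v : Fin n → F) :
    (hammingNorm v : ℤ) = ∑ i, (if v i ≠ 0 then (1:ℤ) else 0) := by
  rw [hammingNorm, Finset.card_filter]
  push_cast
  rfl

private lemma stmt5_key (F : Type) [Field F] [Fintype F] [DecidableEq F] (n : ℕ)
    (c c' : Fin n → F) :
    (∑ a ∈ (Finset.univ : Finset F) \ {0}, (hammingNorm (c' - a • c) : ℤ)) =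
      ((Fintype.card F : ℤ) - 1) * (hammingNorm c' : ℤ) - (hammingNorm c : ℤ)
      + (Fintype.card F : ℤ) *
        ((Finset.univ.filter (fun i => c i ≠ 0 ∧ c' i = 0)).card : ℤ) := by
  have h1 : (∑ a ∈ (Finset.univ : Finset F) \ {0}, (hammingNorm (c' - a • c) : ℤ))
      = ∑ i, ∑ a ∈ (Finset.univ : Finset F) \ {0},
          (if c' i - a * c i ≠ 0 then (1:ℤ) else 0) := by
    rw [Finset.sum_comm]
    apply Finset.sum_congr rfl
    intro a _
    rw [stmt5_norm]
    apply Finset.sum_congr rfl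
    intro i _
    simp [Pi.sub_apply, Pi.smul_apply, smul_eq_mul]
  rw [h1]
  have h2 : ∀ i, ∑ a ∈ (Finset.univ : Finset F) \ {0},
      (if c' i - a * c i ≠ 0 then (1:ℤ) else 0)
      = ((Fintype.card F : ℤ) - 1) * (if c' i ≠ 0 then 1 else 0)
        - (if c i ≠ 0 then 1 else 0)
        + (Fintype.card F : ℤ) * (if c i ≠ 0 ∧ c' i = 0 then 1 else 0) := fun i =>
    stmt5_coord F (c i) (c' i)
  simp_rw [h2]
  rw [Finset.sum_add_distrib, Finset.sum_sub_distrib, ← Finset.mul_sum, ← Finset.mul_sum,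
    stmt5_norm, stmt5_norm, Finset.card_filter]
  push_cast
  rfl

private lemma stmt5_iff (F : Type) [Field F] [Fintype F] [DecidableEq F] (n : ℕ)
    (c c' : Fin n → F) :
    ((∑ a ∈ (Finset.univ : Finset F) \ {0}, (hammingNorm (c' - a • c) : ℤ)) =
      ((Fintype.card F : ℤ) - 1) * (hammingNorm c' : ℤ) - (hammingNorm c : ℤ))
    ↔ ∀ i, c i ≠ 0 → c' i ≠ 0 := by
  rw [stmt5_key]
  have hq : (0:ℤ) < (Fintype.card F : ℤ) := by exact_mod_cast Fintype.card_pos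
  constructor
  · intro h i hci hc'i
    have hE : (Fintype.card F : ℤ) *
        ((Finset.univ.filter (fun i => c i ≠ 0 ∧ c' i = 0)).card : ℤ) = 0 := by linarith
    have : ((Finset.univ.filter (fun i => c i ≠ 0 ∧ c' i = 0)).card : ℤ) = 0 := by
      rcases mul_eq_zero.mp hE with h' | h'
      · exact absurd h' (by positivity)
      · exact h'
    have hcard0 : (Finset.univ.filter (fun i => c i ≠ 0 ∧ c' i = 0)).card = 0 := by
      exact_mod_cast this
    have : i ∈ Finset.univ.filter (fun i => c i ≠ 0 ∧ c' i = 0) := by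
      simp [hci, hc'i]
    rw [Finset.card_eq_zero.mp hcard0] at this
    exact absurd this (Finset.notMem_empty i)
  · intro h
    have : Finset.univ.filter (fun i => c i ≠ 0 ∧ c' i = 0) = ∅ := by
      apply Finset.filter_eq_empty_iff.mpr
      intro i _
      rintro ⟨hci, hc'i⟩
      exact h i hci hc'i
    rw [this]
    simp

theorem stmt5 (F : Type) [Field F] [Fintype F] [DecidableEq F] (n : ℕ)
    (C : Submodule F (Fin n → F)) :
    (∀ c ∈ C, c ≠ 0 → ∀ c' ∈ C,
        (∀ i, c' i ≠ 0 → c i ≠ 0) → ∃ lam : F, c' = lam • c) ↔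
    (∀ c ∈ C, ∀ c' ∈ C, LinearIndependent F ![c, c'] →
        (∑ a ∈ (Finset.univ : Finset F) \ {0}, (hammingNorm (c' - a • c) : ℤ)) ≠
          ((Fintype.card F : ℤ) - 1) * (hammingNorm c' : ℤ) - (hammingNorm c : ℤ)) := by
  constructor
  · intro hmin c hc c' hc' hli heq
    have hsupp : ∀ i, c i ≠ 0 → c' i ≠ 0 := (stmt5_iff F n c c').mp heq
    have hpair := LinearIndependent.pair_iff.mp hli
    have hc'0 : c' ≠ 0 := by
      intro h0
      have := hpair 0 1 (by simp [h0])
      exact one_ne_zero this.2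
    obtain ⟨lam, hlam⟩ := hmin c' hc' hc'0 c hc hsupp
    have : (1 : F) • c + (-lam) • c' = 0 := by
      rw [hlam]; simp
    exact one_ne_zero (hpair 1 (-lam) this).1
  · intro hrhs c hc hc0 c' hc' hsupp
    by_contra hno
    push_neg at hno
    have hli : LinearIndependent F ![c', c] := by
      rw [LinearIndependent.pair_iff]
      intro s t hst
      by_contra hne
      push_neg at hne
      by_cases hs : s = 0
      · subst hs
        simp at hst
        rcases hst with h | h
        · exact absurd h (hne rfl)
        · exact hc0 h
      · apply hno (-(s⁻¹ * t))
        have h1 : s • c' = -(t • c) := eq_neg_of_add_eq_zero_left hst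
        calc c' = s⁻¹ • (s • c') := by rw [smul_smul, inv_mul_cancel₀ hs, one_smul]
          _ = s⁻¹ • (-(t • c)) := by rw [h1]
          _ = (-(s⁻¹ * t)) • c := by rw [smul_neg, smul_smul, neg_smul]
    have := hrhs c' hc' c hc hli
    exact this ((stmt5_iff F n c' c).mpr hsupp)
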